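/- (Theorem 3.1, descent part.) Let f : ℝⁿ → ℝ be differentiable with L-Lipschitz continuous gradient (L > 0), let l ∈ ℝ be such that f + (l/2)‖·‖² is convex, let g : ℝⁿ → (−∞, +∞] be proper and lower semicontinuous, let α ∈ (3/2, 2], and let γ > 0 satisfy the step-size condition ((4−α)/2)(1+γL)² + ((9−2α)/2)γl − (1+α)/2 < 0. Suppose (u^t, v^t, x^t) are PDR iterates. Set A := −(1/γ)[((4−α)/2)(1+γL)² + ((9−2α)/2)γl − (1+α)/2] > 0. Then for all t ≥ 1, M_γ(u^{t+1}, v^{t+1}, x^{t+1}) − M_γ(u^t, v^t, x^t) ≤ −A·‖u^{t+1} − u^t‖²; in particular the sequence {M_γ(u^t, v^t, x^t)}_{t≥1} is nonincreasing. -/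

import Mathlib

open scoped InnerProductSpace RealInnerProductSpace
open Filter Topology

/-- The merit function of the parameterized Douglas–Rachford splitting method. -/
noncomputable def meritFun {n : ℕ} (γ α : ℝ) (f : EuclideanSpace ℝ (Fin n) → ℝ)
    (g : EuclideanSpace ℝ (Fin n) → EReal) (u v x : EuclideanSpace ℝ (Fin n)) : EReal :=
  (f u : EReal) + g v - (((1/(2*γ)) * ‖u - v‖^2 : ℝ) : EReal)
    + (((1/γ) * ⟪x - (α - 1) • u, v - u⟫_ℝ : ℝ) : EReal)
    + ((((2 - α)/(2*γ)) * ‖u‖^2 : ℝ) : EReal)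

private lemma convexOn_grad_ineq {n : ℕ} {φ : EuclideanSpace ℝ (Fin n) → ℝ}
    (hc : ConvexOn ℝ Set.univ φ) {a b G : EuclideanSpace ℝ (Fin n)}
    (hG : HasGradientAt φ G a) :
    φ a + ⟪G, b - a⟫_ℝ ≤ φ b := by
  set ψ : ℝ → ℝ := fun t => φ (a + t • (b - a)) with hψdef
  have hline : HasDerivAt (fun s : ℝ => a + s • (b - a)) (b - a) 0 := by
    simpa using ((hasDerivAt_id (0:ℝ)).smul_const (b - a)).const_add a
  have h1 : HasFDerivAt φ (InnerProductSpace.toDual ℝ _ G) (a + (0:ℝ) • (b - a)) := by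
    simpa using hG.hasFDerivAt
  have hder : HasDerivAt ψ ⟪G, b - a⟫_ℝ 0 := by
    have h2 := h1.comp_hasDerivAt 0 hline
    simp only [InnerProductSpace.toDual_apply_apply] at h2
    exact h2
  have hψc : ConvexOn ℝ Set.univ ψ := by
    refine ⟨convex_univ, ?_⟩
    intro s _ t _ μ ν hμ hν hμν
    have hν' : ν = 1 - μ := by linarith
    have hpt : a + (μ • s + ν • t) • (b - a)
        = μ • (a + s • (b - a)) + ν • (a + t • (b - a)) := by
      rw [hν']; simp only [smul_eq_mul]; module
    simp only [hψdef]
    calc φ (a + (μ • s + ν • t) • (b - a))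
        = φ (μ • (a + s • (b - a)) + ν • (a + t • (b - a))) := by rw [hpt]
      _ ≤ μ • φ (a + s • (b - a)) + ν • φ (a + t • (b - a)) :=
          hc.2 (Set.mem_univ _) (Set.mem_univ _) hμ hν hμν
  have hslope := hψc.le_slope_of_hasDerivAt (Set.mem_univ (0:ℝ)) (Set.mem_univ (1:ℝ))
    one_pos hder
  have h0 : ψ 0 = φ a := by simp [hψdef]
  have h1' : ψ 1 = φ b := by simp [hψdef]
  rw [slope_def_field, h0, h1'] at hslope
  have : ⟪G, b - a⟫_ℝ ≤ φ b - φ a := by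
    simpa using hslope
  linarith

private lemma prox_grad_eq {n : ℕ} {γ : ℝ} (hγ : 0 < γ) {f : EuclideanSpace ℝ (Fin n) → ℝ}
    (hf : Differentiable ℝ f) (x₀ u₀ : EuclideanSpace ℝ (Fin n))
    (hmin : ∀ w, f u₀ + (1/(2*γ)) * ‖u₀ - x₀‖^2 ≤ f w + (1/(2*γ)) * ‖w - x₀‖^2) :
    gradient f u₀ = (1/γ) • (x₀ - u₀) := by
  have h1 : HasFDerivAt f (InnerProductSpace.toDual ℝ _ (gradient f u₀)) u₀ :=
    (hf u₀).hasGradientAt.hasFDerivAt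
  have h2 : HasFDerivAt (fun w : EuclideanSpace ℝ (Fin n) => ‖w - x₀‖^2)
      (2 • (innerSL ℝ (u₀ - x₀)).comp (ContinuousLinearMap.id ℝ _)) u₀ := by
    have := ((hasFDerivAt_id u₀).sub_const x₀).norm_sq
    simpa using this
  have h3 := h1.add (h2.const_mul (1/(2*γ)))
  have hloc : IsLocalMin (fun w => f w + (1/(2*γ)) * ‖w - x₀‖^2) u₀ :=
    Filter.Eventually.of_forall fun w => hmin w
  have h0 := hloc.hasFDerivAt_eq_zero h3
  have hz : ∀ y : EuclideanSpace ℝ (Fin n),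
      ⟪gradient f u₀ - (1/γ) • (x₀ - u₀), y⟫_ℝ = 0 := by
    intro y
    have := congrFun (congrArg (fun (T : _ →L[ℝ] ℝ) => (T : _ → ℝ)) h0) y
    simp only [ContinuousLinearMap.add_apply, ContinuousLinearMap.coe_smul',
      Pi.smul_apply, ContinuousLinearMap.coe_comp', Function.comp,
      ContinuousLinearMap.coe_id', id_eq, ContinuousLinearMap.smul_apply,
      ContinuousLinearMap.zero_apply, InnerProductSpace.toDual_apply_apply, innerSL_apply_apply,
      smul_eq_mul, nsmul_eq_mul, Nat.cast_ofNat] at this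
    rw [inner_sub_left, real_inner_smul_left, inner_sub_left]
    have hne : γ ≠ 0 := ne_of_gt hγ
    have h4 : ⟪u₀ - x₀, y⟫_ℝ = ⟪u₀, y⟫_ℝ - ⟪x₀, y⟫_ℝ := inner_sub_left _ _ _
    rw [h4] at this
    field_simp at this ⊢
    linarith
  have := hz (gradient f u₀ - (1/γ) • (x₀ - u₀))
  rw [inner_self_eq_zero] at this
  exact sub_eq_zero.mp this

private lemma hypo_grad {n : ℕ} {f : EuclideanSpace ℝ (Fin n) → ℝ} (hf : Differentiable ℝ f)
    (l : ℝ) (y : EuclideanSpace ℝ (Fin n)) :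
    HasGradientAt (fun w => f w + (l/2) * ‖w‖^2) (gradient f y + l • y) y := by
  rw [hasGradientAt_iff_hasFDerivAt]
  have h1 : HasFDerivAt f (InnerProductSpace.toDual ℝ _ (gradient f y)) y :=
    (hf y).hasGradientAt.hasFDerivAt
  have h2 : HasFDerivAt (fun w : EuclideanSpace ℝ (Fin n) => ‖w‖^2)
      (2 • (innerSL ℝ y)) y := (hasStrictFDerivAt_norm_sq y).hasFDerivAt
  have h3 := h1.add (h2.const_mul (l/2))
  refine h3.congr_fderiv ?_
  ext z
  simp only [ContinuousLinearMap.add_apply, ContinuousLinearMap.coe_smul', Pi.smul_apply,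
    InnerProductSpace.toDual_apply_apply, innerSL_apply_apply, smul_eq_mul, nsmul_eq_mul,
    Nat.cast_ofNat, ContinuousLinearMap.smul_apply, inner_add_left, real_inner_smul_left]
  ring



set_option maxHeartbeats 2000000 in
/-- Theorem 3.1, descent part: under the step-size condition, the merit
function decreases by at least `A‖u^{t+1} − u^t‖²` at each iteration `t ≥ 1`; in
particular it is nonincreasing. -/
theorem pdr_merit_descent {n : ℕ} (L l γ α : ℝ) (hL : 0 < L) (hγ : 0 < γ)
    (hα : 3/2 < α ∧ α ≤ 2)
    (hstep : ((4 - α)/2) * (1 + γ*L)^2 + ((9 - 2*α)/2) * (γ*l) - (1 + α)/2 < 0)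
    (f : EuclideanSpace ℝ (Fin n) → ℝ) (g : EuclideanSpace ℝ (Fin n) → EReal)
    (hf : Differentiable ℝ f)
    (hlip : ∀ y₁ y₂, ‖gradient f y₁ - gradient f y₂‖ ≤ L * ‖y₁ - y₂‖)
    (hconv : ConvexOn ℝ Set.univ (fun w => f w + (l/2) * ‖w‖^2))
    (hg_lsc : LowerSemicontinuous g) (hg_bot : ∀ w, g w ≠ ⊥) (hg_proper : ∃ w, g w ≠ ⊤)
    (u v x : ℕ → EuclideanSpace ℝ (Fin n))
    (hu : ∀ t : ℕ, ∀ w, f (u (t+1)) + (1/(2*γ)) * ‖u (t+1) - x t‖^2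
        ≤ f w + (1/(2*γ)) * ‖w - x t‖^2)
    (hv : ∀ t : ℕ, ∀ w,
        g (v (t+1)) + (((1/(2*γ)) * ‖v (t+1) - (α • u (t+1) - x t)‖^2 : ℝ) : EReal)
        ≤ g w + (((1/(2*γ)) * ‖w - (α • u (t+1) - x t)‖^2 : ℝ) : EReal))
    (hx : ∀ t : ℕ, x (t+1) = x t + v (t+1) - u (t+1))
    (A : ℝ)
    (hA : A = -(1/γ) * (((4 - α)/2) * (1 + γ*L)^2 + ((9 - 2*α)/2) * (γ*l) - (1 + α)/2)) :
    0 < A ∧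
    (∀ t : ℕ, 1 ≤ t →
      meritFun γ α f g (u (t+1)) (v (t+1)) (x (t+1)) - meritFun γ α f g (u t) (v t) (x t)
        ≤ ((-A * ‖u (t+1) - u t‖^2 : ℝ) : EReal)) ∧
    (∀ t : ℕ, 1 ≤ t →
      meritFun γ α f g (u (t+1)) (v (t+1)) (x (t+1))
        ≤ meritFun γ α f g (u t) (v t) (x t)) := by
  obtain ⟨hα1, hα2⟩ := hα
  have hγne : γ ≠ 0 := ne_of_gt hγ
  have hApos : 0 < A := by
    rw [hA]
    have h1 : (0:ℝ) < 1/γ := by positivity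
    nlinarith [hstep]
  obtain ⟨w₀, hw₀⟩ := hg_proper
  have hvfin : ∀ s : ℕ, g (v (s+1)) ≠ ⊤ := by
    intro s htop
    have h := hv s w₀
    rw [htop, EReal.top_add_coe, top_le_iff,
        ← EReal.coe_toReal hw₀ (hg_bot w₀), ← EReal.coe_add] at h
    exact EReal.coe_ne_top _ h
  have hmerit : ∀ s : ℕ, meritFun γ α f g (u (s+1)) (v (s+1)) (x (s+1))
      = (((f (u (s+1)) + (g (v (s+1))).toReal
          - (1/(2*γ)) * ‖u (s+1) - v (s+1)‖^2
          + (1/γ) * ⟪x (s+1) - (α - 1) • u (s+1), v (s+1) - u (s+1)⟫_ℝ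
          + ((2 - α)/(2*γ)) * ‖u (s+1)‖^2 : ℝ)) : EReal) := by
    intro s
    unfold meritFun
    rw [← EReal.coe_toReal (hvfin s) (hg_bot _)]
    norm_cast
  have main : ∀ k : ℕ,
      (f (u (k+2)) + (g (v (k+2))).toReal - (1/(2*γ)) * ‖u (k+2) - v (k+2)‖^2
        + (1/γ) * ⟪x (k+2) - (α - 1) • u (k+2), v (k+2) - u (k+2)⟫_ℝ
        + ((2 - α)/(2*γ)) * ‖u (k+2)‖^2)
      - (f (u (k+1)) + (g (v (k+1))).toReal - (1/(2*γ)) * ‖u (k+1) - v (k+1)‖^2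
        + (1/γ) * ⟪x (k+1) - (α - 1) • u (k+1), v (k+1) - u (k+1)⟫_ℝ
        + ((2 - α)/(2*γ)) * ‖u (k+1)‖^2)
      ≤ -A * ‖u (k+2) - u (k+1)‖^2 := by
    intro k
    have hq3 : x (k+2) = x (k+1) + v (k+2) - u (k+2) := hx (k+1)
    have hgU : gradient f (u (k+2)) = (1/γ) • (x (k+1) - u (k+2)) :=
      prox_grad_eq hγ hf (x (k+1)) (u (k+2)) (hu (k+1))
    have hgu : gradient f (u (k+1)) = (1/γ) • (x k - u (k+1)) :=
      prox_grad_eq hγ hf (x k) (u (k+1)) (hu k)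
    have hxk : x (k+1) = x k + v (k+1) - u (k+1) := hx k
    have hgu' : gradient f (u (k+1)) = (1/γ) • (x (k+1) - v (k+1)) := by
      rw [hgu]; congr 1; rw [hxk]; abel
    -- the key vector relation and Lipschitz bound
    have he : v (k+1) - u (k+2) = γ • (gradient f (u (k+2)) - gradient f (u (k+1))) := by
      rw [hgU, hgu', ← smul_sub, smul_smul, mul_one_div, div_self hγne, one_smul]
      abel
    have hE : ‖v (k+1) - u (k+2)‖ ≤ γ * L * ‖u (k+2) - u (k+1)‖ := by
      rw [he, norm_smul, Real.norm_eq_abs, abs_of_pos hγ, mul_assoc]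
      exact mul_le_mul_of_nonneg_left (hlip (u (k+2)) (u (k+1))) (le_of_lt hγ)
    -- hypoconvexity inequalities
    have hyp1 : (f (u (k+2)) + (l/2) * ‖u (k+2)‖^2)
        + ⟪gradient f (u (k+2)) + l • u (k+2), u (k+1) - u (k+2)⟫_ℝ
        ≤ f (u (k+1)) + (l/2) * ‖u (k+1)‖^2 :=
      convexOn_grad_ineq hconv (hypo_grad hf l (u (k+2)))
    have hyp2 : (f (u (k+1)) + (l/2) * ‖u (k+1)‖^2)
        + ⟪gradient f (u (k+1)) + l • u (k+1), u (k+2) - u (k+1)⟫_ℝ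
        ≤ f (u (k+2)) + (l/2) * ‖u (k+2)‖^2 :=
      convexOn_grad_ineq hconv (hypo_grad hf l (u (k+1)))
    rw [hgU] at hyp1
    rw [hgu'] at hyp2
    -- f upper bound
    have hfub : f (u (k+2)) - f (u (k+1))
        ≤ (1/γ) * ⟪x (k+1) - u (k+2), u (k+2) - u (k+1)⟫_ℝ
          + (l/2) * ‖u (k+2) - u (k+1)‖^2 := by
      simp only [← real_inner_self_eq_norm_sq, inner_add_left, inner_sub_left,
        inner_sub_right, real_inner_smul_left, real_inner_smul_right,
        real_inner_comm] at hyp1 ⊢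
      linarith [hyp1]
    -- monotonicity-type bound
    have hmono0 : 0 ≤ (1/γ) * ⟪u (k+2) - u (k+1), v (k+1) - u (k+2)⟫_ℝ
        + l * ‖u (k+2) - u (k+1)‖^2 := by
      simp only [← real_inner_self_eq_norm_sq, inner_add_left, inner_sub_left,
        inner_sub_right, real_inner_smul_left, real_inner_smul_right,
        real_inner_comm] at hyp1 hyp2 ⊢
      linarith [hyp1, hyp2]
    have hIPge : -(γ*l) * ‖u (k+2) - u (k+1)‖^2 ≤ ⟪u (k+2) - u (k+1), v (k+1) - u (k+2)⟫_ℝ := by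
      have h' := mul_le_mul_of_nonneg_left hmono0 hγ.le
      have heq : γ * ((1/γ) * ⟪u (k+2) - u (k+1), v (k+1) - u (k+2)⟫_ℝ
          + l * ‖u (k+2) - u (k+1)‖^2)
          = ⟪u (k+2) - u (k+1), v (k+1) - u (k+2)⟫_ℝ + γ*l*‖u (k+2) - u (k+1)‖^2 := by
        field_simp
      rw [heq, mul_zero] at h'
      linarith
    -- g upper bound
    have hgub : (g (v (k+2))).toReal - (g (v (k+1))).toReal
        ≤ (1/(2*γ)) * ‖v (k+1) - (α • u (k+2) - x (k+1))‖^2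
          - (1/(2*γ)) * ‖v (k+2) - (α • u (k+2) - x (k+1))‖^2 := by
      have h := hv (k+1) (v (k+1))
      rw [← EReal.coe_toReal (hvfin (k+1)) (hg_bot _),
          ← EReal.coe_toReal (hvfin k) (hg_bot _),
          ← EReal.coe_add, ← EReal.coe_add, EReal.coe_le_coe_iff] at h
      linarith [h]
    -- the key identity + combination: merit difference bound
    have hkey :
        (f (u (k+2)) + (g (v (k+2))).toReal - (1/(2*γ)) * ‖u (k+2) - v (k+2)‖^2
          + (1/γ) * ⟪(x (k+1) + v (k+2) - u (k+2)) - (α - 1) • u (k+2), v (k+2) - u (k+2)⟫_ℝ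
          + ((2 - α)/(2*γ)) * ‖u (k+2)‖^2)
        - (f (u (k+1)) + (g (v (k+1))).toReal - (1/(2*γ)) * ‖u (k+1) - v (k+1)‖^2
          + (1/γ) * ⟪x (k+1) - (α - 1) • u (k+1), v (k+1) - u (k+1)⟫_ℝ
          + ((2 - α)/(2*γ)) * ‖u (k+1)‖^2)
        ≤ (l/2) * ‖u (k+2) - u (k+1)‖^2
          + (1/γ) * (((1 - α)/2) * ‖u (k+2) - u (k+1)‖^2
            + ‖v (k+1) - u (k+2)‖^2
            + (2 - α) * ⟪u (k+2) - u (k+1), v (k+1) - u (k+2)⟫_ℝ) := by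
      have hid :
          ((1/γ) * ⟪x (k+1) - u (k+2), u (k+2) - u (k+1)⟫_ℝ
            + (l/2) * ‖u (k+2) - u (k+1)‖^2)
          + ((1/(2*γ)) * ‖v (k+1) - (α • u (k+2) - x (k+1))‖^2
            - (1/(2*γ)) * ‖v (k+2) - (α • u (k+2) - x (k+1))‖^2)
          + (-(1/(2*γ)) * (‖u (k+2) - v (k+2)‖^2 - ‖u (k+1) - v (k+1)‖^2)
            + (1/γ) * (⟪(x (k+1) + v (k+2) - u (k+2)) - (α - 1) • u (k+2), v (k+2) - u (k+2)⟫_ℝ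
                - ⟪x (k+1) - (α - 1) • u (k+1), v (k+1) - u (k+1)⟫_ℝ)
            + ((2 - α)/(2*γ)) * (‖u (k+2)‖^2 - ‖u (k+1)‖^2))
          = (l/2) * ‖u (k+2) - u (k+1)‖^2
          + (1/γ) * (((1 - α)/2) * ‖u (k+2) - u (k+1)‖^2
            + ‖v (k+1) - u (k+2)‖^2
            + (2 - α) * ⟪u (k+2) - u (k+1), v (k+1) - u (k+2)⟫_ℝ) := by
        simp only [← real_inner_self_eq_norm_sq, inner_add_left, inner_add_right,
          inner_sub_left, inner_sub_right, real_inner_smul_left, real_inner_smul_right,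
          real_inner_comm]
        ring
      linarith [hfub, hgub, hid]
    -- scalar step
    have hCS : ⟪u (k+2) - u (k+1), v (k+1) - u (k+2)⟫_ℝ
        ≤ ‖u (k+2) - u (k+1)‖ * ‖v (k+1) - u (k+2)‖ := real_inner_le_norm _ _
    have hB' : (l/2) * ‖u (k+2) - u (k+1)‖^2
          + (1/γ) * (((1 - α)/2) * ‖u (k+2) - u (k+1)‖^2
          + ‖v (k+1) - u (k+2)‖^2
          + (2 - α) * ⟪u (k+2) - u (k+1), v (k+1) - u (k+2)⟫_ℝ)
        ≤ -A * ‖u (k+2) - u (k+1)‖^2 := by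
      have hbridge : (l/2) * ‖u (k+2) - u (k+1)‖^2
          + (1/γ) * (((1 - α)/2) * ‖u (k+2) - u (k+1)‖^2
          + ‖v (k+1) - u (k+2)‖^2
          + (2 - α) * ⟪u (k+2) - u (k+1), v (k+1) - u (k+2)⟫_ℝ)
          = (1/γ) * (((γ*l + 1 - α)/2) * ‖u (k+2) - u (k+1)‖^2
          + ‖v (k+1) - u (k+2)‖^2
          + (2 - α) * ⟪u (k+2) - u (k+1), v (k+1) - u (k+2)⟫_ℝ) := by
        field_simp
        ring
      rw [hbridge]
      rcases eq_or_lt_of_le (norm_nonneg (u (k+2) - u (k+1))) with h0 | h0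
      · have hE0 : ‖v (k+1) - u (k+2)‖ = 0 := by
          refine le_antisymm ?_ (norm_nonneg _)
          rw [← h0] at hE; simpa using hE
        have hIP0 : ⟪u (k+2) - u (k+1), v (k+1) - u (k+2)⟫_ℝ = 0 := by
          refine le_antisymm ?_ ?_
          · rw [hE0] at hCS; simpa using hCS
          · have h2 := hIPge; rw [← h0] at h2; simpa using h2
        rw [← h0, hE0, hIP0]
        norm_num
      · have hD2 : 0 < ‖u (k+2) - u (k+1)‖^2 := by positivity
        have hDE2 : ‖u (k+2) - u (k+1)‖ * ‖v (k+1) - u (k+2)‖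
            ≤ γ*L*‖u (k+2) - u (k+1)‖^2 := by nlinarith [hE, norm_nonneg (u (k+2) - u (k+1))]
        have hll : 0 ≤ γ*L + γ*l := by nlinarith [hIPge, hCS, hDE2, hD2]
        have t3a : 0 ≤ γ*L*‖u (k+2) - u (k+1)‖ - ‖v (k+1) - u (k+2)‖ := by linarith
        have t3b : 0 ≤ γ*L*‖u (k+2) - u (k+1)‖ + ‖v (k+1) - u (k+2)‖ :=
          add_nonneg (mul_nonneg (mul_nonneg hγ.le hL.le) (norm_nonneg _)) (norm_nonneg _)
        have n1 : 0 ≤ (2-α)/2 * (γ*L-1)^2 * ‖u (k+2) - u (k+1)‖^2 :=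
          mul_nonneg (mul_nonneg (by linarith) (sq_nonneg _)) (sq_nonneg _)
        have n2 : 0 ≤ (4-α) * ((γ*L+γ*l) * ‖u (k+2) - u (k+1)‖^2) :=
          mul_nonneg (by linarith) (mul_nonneg hll (sq_nonneg _))
        have n3 : 0 ≤ (γ*L*‖u (k+2) - u (k+1)‖ - ‖v (k+1) - u (k+2)‖)
            * (γ*L*‖u (k+2) - u (k+1)‖ + ‖v (k+1) - u (k+2)‖) := mul_nonneg t3a t3b
        have n4 : 0 ≤ (2-α) * (‖u (k+2) - u (k+1)‖
            * (γ*L*‖u (k+2) - u (k+1)‖ - ‖v (k+1) - u (k+2)‖)) :=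
          mul_nonneg (by linarith) (mul_nonneg (norm_nonneg _) t3a)
        have n5 : 0 ≤ (2-α) * (‖u (k+2) - u (k+1)‖ * ‖v (k+1) - u (k+2)‖
            - ⟪u (k+2) - u (k+1), v (k+1) - u (k+2)⟫_ℝ) :=
          mul_nonneg (by linarith) (by linarith)
        have hSC : ((γ*l + 1 - α)/2) * ‖u (k+2) - u (k+1)‖^2
            + ‖v (k+1) - u (k+2)‖^2
            + (2 - α) * ⟪u (k+2) - u (k+1), v (k+1) - u (k+2)⟫_ℝ
            ≤ (((4 - α)/2) * (1 + γ*L)^2 + ((9 - 2*α)/2) * (γ*l) - (1 + α)/2)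
              * ‖u (k+2) - u (k+1)‖^2 := by
          linarith [n1, n2, n3, n4, n5]
        have hfin := mul_le_mul_of_nonneg_left hSC (by positivity : (0:ℝ) ≤ 1/γ)
        have hcoef : (1/γ) * ((((4 - α)/2) * (1 + γ*L)^2 + ((9 - 2*α)/2) * (γ*l) - (1 + α)/2)
              * ‖u (k+2) - u (k+1)‖^2) = -A * ‖u (k+2) - u (k+1)‖^2 := by
          rw [hA]; ring
        linarith [hfin, hcoef.le, hcoef.ge]
    rw [hq3]
    linarith [hkey, hB']
  refine ⟨hApos, ?_, ?_⟩
  · intro t ht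
    obtain ⟨k, rfl⟩ : ∃ k, t = k + 1 := ⟨t - 1, by omega⟩
    rw [hmerit (k+1), hmerit k, ← EReal.coe_sub, EReal.coe_le_coe_iff]
    exact main k
  · intro t ht
    obtain ⟨k, rfl⟩ : ∃ k, t = k + 1 := ⟨t - 1, by omega⟩
    rw [hmerit (k+1), hmerit k, EReal.coe_le_coe_iff]
    have h := main k
    have h2 : 0 ≤ A * ‖u (k+2) - u (k+1)‖^2 := mul_nonneg hApos.le (sq_nonneg _)
    linarith
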